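/- Let W ∈ ℝ^{n×n} be doubly stochastic with σ := ‖W − (1/n)1_n1_nᵀ‖₂ < 1, let α ∈ ℝ, and let X, Y ∈ ℝ^{n×p}. Define X⁺ := WX − αY. Then both of the following hold: (i) ‖X⁺ − JX⁺‖_F² ≤ ((1+σ²)/2)‖X − JX‖_F² + (2α²/(1−σ²))‖Y − JY‖_F²; (ii) ‖X⁺ − JX⁺‖_F² ≤ 2‖X − JX‖_F² + 2α²‖Y − JY‖_F². -/

import Mathlib

/-- The ℓ₂ operator (spectral) norm of a real matrix. -/
noncomputable def l2OpNorm {m n : ℕ} (A : Matrix (Fin m) (Fin n) ℝ) : ℝ :=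
  ‖LinearMap.toContinuousLinearMap (Matrix.toEuclideanLin A)‖

/-- The Frobenius norm of a real matrix. -/
noncomputable def frobNorm {n p : ℕ} (X : Matrix (Fin n) (Fin p) ℝ) : ℝ :=
  Real.sqrt (∑ i, ∑ j, X i j ^ 2)

/-- The averaging matrix `J = (1/n) 1ₙ1ₙᵀ`. -/
noncomputable def avgMat (n : ℕ) : Matrix (Fin n) (Fin n) ℝ := Matrix.of fun _ _ => (n : ℝ)⁻¹

/-- A matrix is doubly stochastic if it is entrywise nonnegative and all its
row sums and column sums equal `1`. -/
def IsDoublyStochastic {n : ℕ} (W : Matrix (Fin n) (Fin n) ℝ) : Prop :=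
  (∀ i j, 0 ≤ W i j) ∧ (∀ i, ∑ j, W i j = 1) ∧ (∀ j, ∑ i, W i j = 1)

section Aux

variable {n p : ℕ}

lemma frobNorm_nonneg (X : Matrix (Fin n) (Fin p) ℝ) : 0 ≤ frobNorm X :=
  Real.sqrt_nonneg _

lemma frobNorm_eq_norm (X : Matrix (Fin n) (Fin p) ℝ) :
    frobNorm X =
      ‖(WithLp.equiv 2 (Fin n × Fin p → ℝ)).symm (fun q => X q.1 q.2)‖ := by
  rw [EuclideanSpace.norm_eq, frobNorm]
  congr 1
  rw [Fintype.sum_prod_type]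
  exact Finset.sum_congr rfl fun i _ => Finset.sum_congr rfl fun j _ => by simp [sq_abs]

lemma frobNorm_sub_le (A B : Matrix (Fin n) (Fin p) ℝ) :
    frobNorm (A - B) ≤ frobNorm A + frobNorm B := by
  simp only [frobNorm_eq_norm]
  have h : (WithLp.equiv 2 (Fin n × Fin p → ℝ)).symm (fun q => (A - B) q.1 q.2)
      = (WithLp.equiv 2 (Fin n × Fin p → ℝ)).symm (fun q => A q.1 q.2)
        - (WithLp.equiv 2 (Fin n × Fin p → ℝ)).symm (fun q => B q.1 q.2) := rfl
  rw [h]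
  exact norm_sub_le _ _

lemma frobNorm_smul (a : ℝ) (Y : Matrix (Fin n) (Fin p) ℝ) :
    frobNorm (a • Y) = |a| * frobNorm Y := by
  simp only [frobNorm_eq_norm]
  have h : (WithLp.equiv 2 (Fin n × Fin p → ℝ)).symm (fun q => (a • Y) q.1 q.2)
      = a • (WithLp.equiv 2 (Fin n × Fin p → ℝ)).symm (fun q => Y q.1 q.2) := rfl
  rw [h, norm_smul, Real.norm_eq_abs]

lemma frobNorm_sq (X : Matrix (Fin n) (Fin p) ℝ) :
    frobNorm X ^ 2 = ∑ i, ∑ j, X i j ^ 2 :=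
  Real.sq_sqrt (by positivity)

lemma frobNorm_sq_cols (Z : Matrix (Fin n) (Fin p) ℝ) :
    frobNorm Z ^ 2 = ∑ j, ‖(WithLp.equiv 2 (Fin n → ℝ)).symm (fun i => Z i j)‖ ^ 2 := by
  rw [frobNorm_sq, Finset.sum_comm]
  refine Finset.sum_congr rfl fun j _ => ?_
  rw [EuclideanSpace.norm_eq, Real.sq_sqrt (by positivity)]
  exact Finset.sum_congr rfl fun i _ => by simp [sq_abs]

lemma frobNorm_mul_le (A : Matrix (Fin n) (Fin n) ℝ) (Z : Matrix (Fin n) (Fin p) ℝ) :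
    frobNorm (A * Z) ≤ l2OpNorm A * frobNorm Z := by
  have hA : (0:ℝ) ≤ l2OpNorm A := norm_nonneg _
  have key : frobNorm (A * Z) ^ 2 ≤ (l2OpNorm A * frobNorm Z) ^ 2 := by
    rw [mul_pow, frobNorm_sq_cols, frobNorm_sq_cols Z, Finset.mul_sum]
    refine Finset.sum_le_sum fun j _ => ?_
    have h1 : (WithLp.equiv 2 (Fin n → ℝ)).symm (fun i => (A * Z) i j)
        = LinearMap.toContinuousLinearMap (Matrix.toEuclideanLin A)
            ((WithLp.equiv 2 (Fin n → ℝ)).symm (fun i => Z i j)) := by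
      rw [LinearMap.coe_toContinuousLinearMap',
        WithLp.equiv_symm_apply, Matrix.toEuclideanLin_apply_piLp_toLp]
      congr 1
    rw [h1]
    have h2 := (LinearMap.toContinuousLinearMap (Matrix.toEuclideanLin A)).le_opNorm
      ((WithLp.equiv 2 (Fin n → ℝ)).symm (fun i => Z i j))
    calc ‖LinearMap.toContinuousLinearMap (Matrix.toEuclideanLin A)
            ((WithLp.equiv 2 (Fin n → ℝ)).symm (fun i => Z i j))‖ ^ 2
        ≤ (l2OpNorm A * ‖(WithLp.equiv 2 (Fin n → ℝ)).symm (fun i => Z i j)‖) ^ 2 :=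
          pow_le_pow_left₀ (norm_nonneg _) h2 2
      _ = l2OpNorm A ^ 2 * ‖(WithLp.equiv 2 (Fin n → ℝ)).symm (fun i => Z i j)‖ ^ 2 := by
          ring
  nlinarith [key, frobNorm_nonneg (A * Z), mul_nonneg hA (frobNorm_nonneg Z)]

lemma avg_mul_avg : avgMat n * avgMat n = avgMat n := by
  ext i j
  have hn : (n:ℝ) ≠ 0 := by
    have : 0 < n := i.pos
    exact_mod_cast this.ne'
  simp only [avgMat, Matrix.mul_apply, Matrix.of_apply]
  rw [Finset.sum_const, Finset.card_univ, Fintype.card_fin, nsmul_eq_mul]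
  field_simp

lemma mul_avg_of_ds {W : Matrix (Fin n) (Fin n) ℝ} (hW : IsDoublyStochastic W) :
    W * avgMat n = avgMat n := by
  ext i j
  simp only [avgMat, Matrix.mul_apply, Matrix.of_apply]
  rw [← Finset.sum_mul, hW.2.1 i, one_mul]

lemma avg_mul_of_ds {W : Matrix (Fin n) (Fin n) ℝ} (hW : IsDoublyStochastic W) :
    avgMat n * W = avgMat n := by
  ext i j
  simp only [avgMat, Matrix.mul_apply, Matrix.of_apply]
  rw [← Finset.mul_sum, hW.2.2 j, mul_one]

lemma numeric_step (σ c d b f α : ℝ) (hf0 : 0 ≤ f) (hc0 : 0 ≤ c) (hb0 : 0 ≤ b)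
    (hσ0 : 0 ≤ σ) (hσ1 : σ < 1) (hb2 : b ^ 2 = α ^ 2 * d ^ 2) (hf : f ≤ σ * c + b) :
    f ^ 2 ≤ (1 + σ ^ 2) / 2 * c ^ 2 + 2 * α ^ 2 / (1 - σ ^ 2) * d ^ 2 ∧
      f ^ 2 ≤ 2 * c ^ 2 + 2 * α ^ 2 * d ^ 2 := by
  have hfsq : f ^ 2 ≤ (σ * c + b) ^ 2 := pow_le_pow_left₀ hf0 hf 2
  have h1u : 0 < 1 - σ ^ 2 := by nlinarith
  constructor
  · have key : (1 - σ ^ 2) * f ^ 2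
        ≤ (1 - σ ^ 2) * ((1 + σ ^ 2) / 2 * c ^ 2) + 2 * α ^ 2 * d ^ 2 := by
      nlinarith [hfsq, sq_nonneg ((1 - σ ^ 2) * c - 2 * σ * b),
        mul_nonneg h1u.le (sq_nonneg b), hb2]
    have hq : 2 * α ^ 2 / (1 - σ ^ 2) * d ^ 2 * (1 - σ ^ 2) = 2 * α ^ 2 * d ^ 2 := by
      field_simp
    nlinarith [key, hq, h1u]
  · have hs1 : σ ^ 2 ≤ 1 := by nlinarith
    nlinarith [hfsq, hb2, sq_nonneg (σ * c - b),
      mul_le_mul_of_nonneg_right hs1 (sq_nonneg c)]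

end Aux

/-- Consensus-error inequalities for the update `X⁺ = WX − αY`. -/
theorem consensus_error_update {n p : ℕ} (W : Matrix (Fin n) (Fin n) ℝ)
    (hW : IsDoublyStochastic W) (σ : ℝ) (hσ : σ = l2OpNorm (W - avgMat n))
    (hσ1 : σ < 1) (α : ℝ) (X Y Xp : Matrix (Fin n) (Fin p) ℝ)
    (hXp : Xp = W * X - α • Y) :
    frobNorm (Xp - avgMat n * Xp) ^ 2 ≤
        (1 + σ ^ 2) / 2 * frobNorm (X - avgMat n * X) ^ 2 +
          2 * α ^ 2 / (1 - σ ^ 2) * frobNorm (Y - avgMat n * Y) ^ 2 ∧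
      frobNorm (Xp - avgMat n * Xp) ^ 2 ≤
        2 * frobNorm (X - avgMat n * X) ^ 2 +
          2 * α ^ 2 * frobNorm (Y - avgMat n * Y) ^ 2 := by
  have hWJ : W * avgMat n = avgMat n := mul_avg_of_ds hW
  have hJW : avgMat n * W = avgMat n := avg_mul_of_ds hW
  have hJJ : avgMat n * avgMat n = avgMat n := avg_mul_avg
  have hid : Xp - avgMat n * Xp
      = (W - avgMat n) * (X - avgMat n * X) - α • (Y - avgMat n * Y) := by
    subst hXp
    simp only [Matrix.mul_sub, Matrix.sub_mul, Matrix.mul_smul, smul_sub,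
      ← Matrix.mul_assoc, hWJ, hJW, hJJ]
    abel
  set f := frobNorm (Xp - avgMat n * Xp) with hfdef
  set c := frobNorm (X - avgMat n * X) with hcdef
  set d := frobNorm (Y - avgMat n * Y) with hddef
  set b := |α| * d with hbdef
  have hf0 : 0 ≤ f := frobNorm_nonneg _
  have hc0 : 0 ≤ c := frobNorm_nonneg _
  have hd0 : 0 ≤ d := frobNorm_nonneg _
  have hb0 : 0 ≤ b := mul_nonneg (abs_nonneg _) hd0
  have hσ0 : 0 ≤ σ := hσ ▸ norm_nonneg _
  have hb2 : b ^ 2 = α ^ 2 * d ^ 2 := by rw [hbdef, mul_pow, sq_abs]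
  have hf : f ≤ σ * c + b := by
    rw [hfdef, hid]
    calc frobNorm ((W - avgMat n) * (X - avgMat n * X) - α • (Y - avgMat n * Y))
        ≤ frobNorm ((W - avgMat n) * (X - avgMat n * X))
          + frobNorm (α • (Y - avgMat n * Y)) := frobNorm_sub_le _ _
      _ ≤ σ * c + b := by
          refine add_le_add ?_ ?_
          · rw [hσ]; exact frobNorm_mul_le _ _
          · rw [frobNorm_smul]
  exact numeric_step σ c d b f α hf0 hc0 hb0 hσ0 hσ1 hb2 hf
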